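/- The intersection of the closure of S in D with the locus {(s₁,s₂,v₀,v₁,v₂) ∈ D : s₁·s₂ = 0} equals the set {(s₁, s₂, −(h₁+h₂ω), 0, 0) : s₁, s₂ ∈ ℂ, |s₁| < 1, |s₂| < 1, s₁·s₂ = 0, (h₁,h₂) ∈ ℤ²}; in other words, over the locus s₁s₂ = 0 the closure consists exactly of the points whose third coordinate lies in the lattice ℤ + ℤω and whose last two coordinates vanish. -/

import Mathlib

open Filter Topology Complex

-- lattice discreteness
lemma lat_zero (ω : ℂ) (hω : ω.im ≠ 0) (a b : ℤ)
    (h : ‖((a:ℂ)+(b:ℂ)*ω)‖ < min 1 |ω.im|) : ((a:ℂ)+(b:ℂ)*ω) = 0 := by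
  by_cases hb : b = 0
  · subst hb
    simp only [Int.cast_zero, zero_mul, add_zero] at h ⊢
    have h1 : |(a:ℝ)| < 1 := by
      have := lt_of_lt_of_le h (min_le_left _ _)
      simpa using this
    have h2 : (|a| : ℤ) < 1 := by exact_mod_cast (by rwa [← Int.cast_abs] at h1 : ((|a|:ℤ):ℝ) < 1)
    have : a = 0 := Int.abs_lt_one_iff.mp h2
    simp [this]
  · exfalso
    have him : ((a:ℂ)+(b:ℂ)*ω).im = (b:ℝ) * ω.im := by
      simp [Complex.add_im, Complex.mul_im]
    have h1 : |((a:ℂ)+(b:ℂ)*ω).im| ≤ ‖((a:ℂ)+(b:ℂ)*ω)‖ := Complex.abs_im_le_norm _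
    have h2 : (1:ℝ) ≤ |(b:ℝ)| := by
      rw [← Int.cast_abs]; exact_mod_cast Int.one_le_abs hb
    have h3 : |ω.im| ≤ |(b:ℝ) * ω.im| := by
      rw [abs_mul]; nlinarith [abs_nonneg ω.im]
    have h4 : min 1 |ω.im| ≤ |ω.im| := min_le_right _ _
    rw [him] at h1
    linarith

lemma exp_seq (s : ℂ) (hs : ‖s‖ < 1) :
    ∃ z : ℕ → ℂ, (∀ n, 0 < (z n).im) ∧
      Tendsto (fun n => Complex.exp (2 * Real.pi * Complex.I * z n)) atTop (𝓝 s) := by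
  by_cases h0 : s = 0
  · refine ⟨fun n => ((n:ℝ)+1) * Complex.I, fun n => by simp; positivity, ?_⟩
    have key : ∀ n : ℕ, Complex.exp (2*Real.pi*Complex.I * (((n:ℝ)+1)*Complex.I))
        = ((Real.exp (-(2*Real.pi*((n:ℝ)+1))) : ℝ) : ℂ) := by
      intro n
      rw [Complex.ofReal_exp]
      congr 1
      push_cast
      rw [show (2*(Real.pi:ℂ)*Complex.I * (((n:ℕ)+1)*Complex.I)) =
        (2*(Real.pi:ℂ)*((n:ℕ)+1)) * (Complex.I*Complex.I) by ring, Complex.I_mul_I]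
      ring
    subst h0
    rw [show (0:ℂ) = ((0:ℝ):ℂ) by simp]
    refine (Complex.continuous_ofReal.tendsto 0).comp ?_ |>.congr (fun n => (key n).symm)
    refine Real.tendsto_exp_atBot.comp ?_
    have h1 : Tendsto (fun n : ℕ => 2*Real.pi*((n:ℝ)+1)) atTop atTop := by
      apply Tendsto.const_mul_atTop (by positivity)
      exact tendsto_atTop_add_const_right _ 1 tendsto_natCast_atTop_atTop
    simpa using tendsto_neg_atBot_iff.mpr h1
  · refine ⟨fun _ => (((2*Real.pi)⁻¹ : ℝ) : ℂ) * (-Complex.I * Complex.log s), fun n => ?_, ?_⟩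
    · have : ((((2*Real.pi)⁻¹ : ℝ) : ℂ) * (-Complex.I * Complex.log s)).im
          = (2*Real.pi)⁻¹ * (-(Complex.log s).re) := by
        simp [Complex.mul_im, Complex.mul_re]
      rw [this, Complex.log_re]
      have hpos : 0 < ‖s‖ := norm_pos_iff.mpr h0
      have : Real.log ‖s‖ < 0 := Real.log_neg hpos hs
      have hpi : 0 < (2*Real.pi)⁻¹ := by positivity
      nlinarith
    · have : (2 * (Real.pi:ℂ) * Complex.I * ((((2*Real.pi)⁻¹ : ℝ) : ℂ) * (-Complex.I * Complex.log s)))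
          = Complex.log s := by
        have hpi : (Real.pi:ℂ) ≠ 0 := by exact_mod_cast Real.pi_ne_zero
        push_cast
        field_simp
        linear_combination (-Complex.log s) * Complex.I_mul_I
      simp only [this, Complex.exp_log h0]
      exact tendsto_const_nhds

theorem stmt13 (ω : ℂ) (hω : ω.im ≠ 0)
    (S : Set (ℂ × ℂ × ℂ × ℂ × ℂ))
    (hS : S = {p | ∃ z₁ z₂ : ℂ, 0 < z₁.im ∧ 0 < z₂.im ∧ ∃ h₁ h₂ h₃ h₄ : ℤ,
      p = (Complex.exp (2 * Real.pi * Complex.I * z₁),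
           Complex.exp (2 * Real.pi * Complex.I * z₂),
           (z₁ + z₂) * ((h₃ : ℂ) + (h₄ : ℂ) * ω) - ((h₁ : ℂ) + (h₂ : ℂ) * ω),
           -((h₃ : ℂ) + (h₄ : ℂ) * ω) * Complex.exp (-(2 * Real.pi * Complex.I * z₁)),
           -((h₃ : ℂ) + (h₄ : ℂ) * ω) * Complex.exp (-(2 * Real.pi * Complex.I * z₂)))}) :
    {p : ℂ × ℂ × ℂ × ℂ × ℂ | p ∈ closure S ∧ ‖p.1‖ < 1 ∧
        ‖p.2.1‖ < 1 ∧ p.1 * p.2.1 = 0} =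
    {p : ℂ × ℂ × ℂ × ℂ × ℂ | ‖p.1‖ < 1 ∧ ‖p.2.1‖ < 1 ∧
        p.1 * p.2.1 = 0 ∧ (∃ h₁ h₂ : ℤ, p.2.2.1 = -((h₁ : ℂ) + (h₂ : ℂ) * ω)) ∧
        p.2.2.2.1 = 0 ∧ p.2.2.2.2 = 0} := by
  set δ := min 1 |ω.im| with hδdef
  have hδ : 0 < δ := lt_min one_pos (abs_pos.mpr hω)
  ext p
  simp only [Set.mem_setOf_eq]
  constructor
  · rintro ⟨hcl, h1, h2, h12⟩
    refine ⟨h1, h2, h12, ?_⟩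
    rw [mem_closure_iff_seq_limit] at hcl
    obtain ⟨f, hfS, hft⟩ := hcl
    rw [hS] at hfS
    simp only [Set.mem_setOf_eq] at hfS
    choose z₁ z₂ hz₁ hz₂ h₁ h₂ h₃ h₄ hf using hfS
    set L : ℕ → ℂ := fun n => (h₃ n : ℂ) + (h₄ n : ℂ) * ω with hLdef
    -- the product identity
    have hid : ∀ n, (f n).2.2.2.1 * (f n).2.2.2.2 * ((f n).1 * (f n).2.1) = (L n)^2 := by
      intro n
      rw [hf n]
      simp only
      rw [Complex.exp_neg, Complex.exp_neg]
      have e1 := Complex.exp_ne_zero (2 * (Real.pi:ℂ) * Complex.I * z₁ n)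
      have e2 := Complex.exp_ne_zero (2 * (Real.pi:ℂ) * Complex.I * z₂ n)
      field_simp
      ring
    -- continuity : (L n)^2 → 0
    have hg : Tendsto (fun n => (L n)^2) atTop (𝓝 0) := by
      have hc : Continuous (fun q : ℂ × ℂ × ℂ × ℂ × ℂ => q.2.2.2.1 * q.2.2.2.2 * (q.1 * q.2.1)) := by
        fun_prop
      have := (hc.tendsto p).comp hft
      simp only [Function.comp_def] at this
      rw [show (fun n => (L n)^2) = fun n => (f n).2.2.2.1 * (f n).2.2.2.2 * ((f n).1 * (f n).2.1)
        from funext fun n => (hid n).symm]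
      simpa [h12] using this
    -- eventually L n = 0
    have hLz : ∀ᶠ n in atTop, L n = 0 := by
      have hball := hg.eventually (Metric.ball_mem_nhds (0:ℂ) (by positivity : (0:ℝ) < δ^2))
      filter_upwards [hball] with n hn
      simp only [Metric.mem_ball, dist_zero_right, norm_pow] at hn
      have habs : ‖L n‖ < δ := by
        nlinarith [norm_nonneg (L n), _root_.sq_abs ‖L n‖]
      exact lat_zero ω hω (h₃ n) (h₄ n) habs
    obtain ⟨N, hN⟩ := eventually_atTop.mp hLz
    -- third coordinate
    have hv0t : Tendsto (fun n => (f n).2.2.1) atTop (𝓝 p.2.2.1) := by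
      have hc : Continuous (fun q : ℂ × ℂ × ℂ × ℂ × ℂ => q.2.2.1) := by fun_prop
      exact (hc.tendsto p).comp hft
    have hv0eq : ∀ n, N ≤ n → (f n).2.2.1 = -((h₁ n : ℂ) + (h₂ n : ℂ) * ω) := by
      intro n hn
      rw [hf n]
      simp only
      rw [show ((h₃ n : ℂ) + (h₄ n : ℂ) * ω) = L n from rfl, hN n hn]
      ring
    -- get M with dist < δ/2
    have hhalf := hv0t.eventually (Metric.ball_mem_nhds p.2.2.1 (by positivity : (0:ℝ) < δ/2))
    obtain ⟨M0, hM0⟩ := eventually_atTop.mp hhalf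
    set M := max M0 N with hMdef
    have hMN : N ≤ M := le_max_right _ _
    have hMM0 : M0 ≤ M := le_max_left _ _
    have hconst : ∀ n, M ≤ n → (f n).2.2.1 = (f M).2.2.1 := by
      intro n hn
      have d1 := hM0 n (le_trans hMM0 hn)
      have d2 := hM0 M hMM0
      simp only [Metric.mem_ball, Complex.dist_eq] at d1 d2
      have : ‖(f n).2.2.1 - (f M).2.2.1‖ < δ := by
        calc ‖(f n).2.2.1 - (f M).2.2.1‖
            ≤ ‖(f n).2.2.1 - p.2.2.1‖ + ‖p.2.2.1 - (f M).2.2.1‖ := by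
              simpa using norm_sub_le_norm_sub_add_norm_sub (f n).2.2.1 p.2.2.1 (f M).2.2.1
          _ < δ/2 + δ/2 := by
              rw [show ‖p.2.2.1 - (f M).2.2.1‖ = ‖(f M).2.2.1 - p.2.2.1‖
                from norm_sub_rev _ _]
              exact add_lt_add d1 d2
          _ = δ := by ring
      rw [hv0eq n (le_trans hMN hn), hv0eq M hMN] at this ⊢
      have heq : (-(((h₁ n : ℂ)) + (h₂ n : ℂ) * ω)) - (-(((h₁ M : ℂ)) + (h₂ M : ℂ) * ω)) =
          ((((h₁ M - h₁ n : ℤ)) : ℂ) + (((h₂ M - h₂ n : ℤ)) : ℂ) * ω) := by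
        push_cast; ring
      rw [heq] at this
      have hz := lat_zero ω hω _ _ this
      have : ((h₁ n : ℂ)) + (h₂ n : ℂ) * ω = ((h₁ M : ℂ)) + (h₂ M : ℂ) * ω := by
        have := hz
        push_cast at this
        linear_combination -this
      rw [this]
    have hlim : p.2.2.1 = (f M).2.2.1 := by
      have ht2 : Tendsto (fun _ : ℕ => (f M).2.2.1) atTop (𝓝 ((f M).2.2.1)) := tendsto_const_nhds
      have : Tendsto (fun n => (f n).2.2.1) atTop (𝓝 ((f M).2.2.1)) := by
        refine ht2.congr' ?_
        filter_upwards [eventually_ge_atTop M] with n hn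
        exact (hconst n hn).symm
      exact tendsto_nhds_unique hv0t this
    refine ⟨⟨h₁ M, h₂ M, by rw [hlim, hv0eq M hMN]⟩, ?_, ?_⟩
    · -- fourth coordinate = 0
      have hc : Continuous (fun q : ℂ × ℂ × ℂ × ℂ × ℂ => q.2.2.2.1) := by fun_prop
      have ht := (hc.tendsto p).comp hft
      have hz : Tendsto (fun n => (f n).2.2.2.1) atTop (𝓝 (0:ℂ)) := by
        refine tendsto_const_nhds.congr' ?_
        filter_upwards [eventually_ge_atTop N] with n hn
        rw [hf n]
        simp only
        rw [show ((h₃ n : ℂ) + (h₄ n : ℂ) * ω) = L n from rfl, hN n hn]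
        ring
      exact tendsto_nhds_unique ht hz
    · have hc : Continuous (fun q : ℂ × ℂ × ℂ × ℂ × ℂ => q.2.2.2.2) := by fun_prop
      have ht := (hc.tendsto p).comp hft
      have hz : Tendsto (fun n => (f n).2.2.2.2) atTop (𝓝 (0:ℂ)) := by
        refine tendsto_const_nhds.congr' ?_
        filter_upwards [eventually_ge_atTop N] with n hn
        rw [hf n]
        simp only
        rw [show ((h₃ n : ℂ) + (h₄ n : ℂ) * ω) = L n from rfl, hN n hn]
        ring
      exact tendsto_nhds_unique ht hz
  · rintro ⟨h1, h2, h12, ⟨a, b, hv0⟩, hv1, hv2⟩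
    refine ⟨?_, h1, h2, h12⟩
    rw [mem_closure_iff_seq_limit]
    obtain ⟨w₁, hw₁, hwt₁⟩ := exp_seq p.1 h1
    obtain ⟨w₂, hw₂, hwt₂⟩ := exp_seq p.2.1 h2
    refine ⟨fun n => (Complex.exp (2 * Real.pi * Complex.I * w₁ n),
      Complex.exp (2 * Real.pi * Complex.I * w₂ n), -((a:ℂ) + (b:ℂ)*ω), 0, 0), ?_, ?_⟩
    · intro n
      rw [hS]
      refine ⟨w₁ n, w₂ n, hw₁ n, hw₂ n, a, b, 0, 0, ?_⟩
      simp
    · have hp : p = (p.1, p.2.1, -((a:ℂ) + (b:ℂ)*ω), (0:ℂ), (0:ℂ)) :=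
        Prod.ext_iff.mpr ⟨rfl, Prod.ext_iff.mpr ⟨rfl, Prod.ext_iff.mpr ⟨hv0,
          Prod.ext_iff.mpr ⟨hv1, hv2⟩⟩⟩⟩
      rw [hp]
      exact hwt₁.prodMk_nhds (hwt₂.prodMk_nhds (tendsto_const_nhds.prodMk_nhds
        (tendsto_const_nhds.prodMk_nhds tendsto_const_nhds)))
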